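/- Let k be a field and K = k(a, b, η) a purely transcendental extension in three variables. The k-algebra endomorphism τ of K determined by τ(a) = a⁻¹, τ(b) = η⁵b⁻², τ(η) = η²b⁻¹ is a well-defined field automorphism satisfying τ²(a) = a, τ²(b) = b⁻¹, τ²(η) = η⁻¹, and τ⁴ = id. -/

import Mathlib

open MvPolynomial Finset
noncomputable section
variable (k : Type*) [Field k]
abbrev Apoly (k : Type*) [Field k] := MvPolynomial (Fin 3) k
abbrev Kfield (k : Type*) [Field k] := FractionRing (MvPolynomial (Fin 3) k)
def XK (i : Fin 3) : Kfield k := algebraMap (Apoly k) (Kfield k) (X i)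
theorem XK_ne_zero (i : Fin 3) : XK k i ≠ 0 := by
  simpa [XK] using
    (map_ne_zero_iff _ (IsFractionRing.injective (Apoly k) (Kfield k))).mpr (X_ne_zero i)
def UK (i : Fin 3) : (Kfield k)ˣ := Units.mk0 (XK k i) (XK_ne_zero k i)

/-- the Laurent-monomial values -/
def vv (c : Fin 3 → Fin 3 → ℤ) (j : Fin 3) : Kfield k := ∏ i, XK k i ^ c j i

theorem vv_eq_units (c : Fin 3 → Fin 3 → ℤ) (j : Fin 3) :
    vv k c j = ↑(∏ i, UK k i ^ c j i) := by
  simp [vv, UK, XK]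

-- algebraMap of a monomial
theorem algebraMap_monomial (m : Fin 3 →₀ ℕ) (co : k) :
    algebraMap (Apoly k) (Kfield k) (monomial m co)
      = algebraMap k (Kfield k) co * ∏ i, XK k i ^ (m i) := by
  have h : (IsScalarTower.toAlgHom k (Apoly k) (Kfield k)) = aeval (XK k) := by
    apply algHom_ext; intro i; simp [XK]
  have h2 : algebraMap (Apoly k) (Kfield k) (monomial m co) = aeval (XK k) (monomial m co) := by
    rw [← h]; rfl
  rw [h2, aeval_monomial, Finsupp.prod_fintype]
  intro i; exact pow_zero _

theorem aeval_vv_monomial (c : Fin 3 → Fin 3 → ℤ) (m : Fin 3 →₀ ℕ) (co : k) :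
    aeval (vv k c) (monomial m co)
      = algebraMap k (Kfield k) co * ↑(∏ i, UK k i ^ (∑ j, (m j : ℤ) * c j i)) := by
  rw [aeval_monomial, Finsupp.prod_fintype _ _ (fun i => pow_zero _)]
  congr 1
  have h1 : ∀ j, vv k c j ^ (m j) = (((∏ i, UK k i ^ c j i) ^ (m j) : (Kfield k)ˣ) : Kfield k) := by
    intro j; rw [vv_eq_units, Units.val_pow_eq_pow_val]
  rw [Finset.prod_congr rfl fun j _ => h1 j]
  norm_cast
  -- group identity in the unit group
  have h2 : ∀ j, (∏ i, UK k i ^ c j i) ^ (m j) = ∏ i, UK k i ^ ((m j : ℤ) * c j i) := by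
    intro j
    rw [← zpow_natCast _ (m j), ← Finset.prod_zpow]
    exact Finset.prod_congr rfl fun i _ => by rw [mul_comm, ← zpow_mul, mul_comm]
  rw [Finset.prod_congr rfl fun j _ => h2 j, Finset.prod_comm]
  refine Finset.prod_congr rfl fun i _ => ?_
  simp [Fin.prod_univ_three, Fin.sum_univ_three, zpow_add]

theorem aeval_vv_injective (c : Fin 3 → Fin 3 → ℤ)
    (hc : ∀ d d' : Fin 3 → ℤ, (∀ i, ∑ j, d j * c j i = ∑ j, d' j * c j i) → d = d') :
    Function.Injective (aeval (vv k c) : Apoly k →ₐ[k] Kfield k) := by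
  rw [injective_iff_map_eq_zero]
  intro p hp
  by_contra hp0
  set E : (Fin 3 →₀ ℕ) → Fin 3 → ℤ := fun d i => ∑ j, (d j : ℤ) * c j i with hE
  set s : Fin 3 → ℤ := fun i => ∑ d ∈ p.support, |E d i| with hs
  have hnn : ∀ d ∈ p.support, ∀ i, 0 ≤ E d i + s i := by
    intro d hd i
    have h1 : |E d i| ≤ s i := Finset.single_le_sum (f := fun d => |E d i|) (fun d _ => abs_nonneg _) hd
    have h2 := neg_abs_le (E d i)
    linarith
  set e : (Fin 3 →₀ ℕ) → (Fin 3 →₀ ℕ) :=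
    fun d => Finsupp.equivFunOnFinite.symm fun i => (E d i + s i).toNat with he
  have hinj : ∀ d ∈ p.support, ∀ d' ∈ p.support, e d = e d' → d = d' := by
    intro d hd d' hd' h
    have h2 : ∀ i, E d i = E d' i := by
      intro i
      have h3 : (E d i + s i).toNat = (E d' i + s i).toNat := by
        have := congrArg (fun f : Fin 3 →₀ ℕ => f i) h
        simpa [he] using this
      have h4 := congrArg (fun n : ℕ => (n : ℤ)) h3
      simp only [Int.toNat_of_nonneg (hnn d hd i), Int.toNat_of_nonneg (hnn d' hd' i)] at h4
      linarith
    have h5 := hc (fun j => (d j : ℤ)) (fun j => (d' j : ℤ)) h2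
    ext j
    exact_mod_cast congrFun h5 j
  set q : Apoly k := ∑ d ∈ p.support, monomial (e d) (coeff d p) with hq
  have hq0 : q ≠ 0 := by
    obtain ⟨d₀, hd₀⟩ := support_nonempty.mpr hp0
    intro h
    have hco : coeff (e d₀) q = coeff d₀ p := by
      rw [hq, coeff_sum]
      rw [Finset.sum_eq_single d₀]
      · rw [coeff_monomial, if_pos rfl]
      · intro d hd hne
        rw [coeff_monomial, if_neg (fun hh => hne (hinj d hd d₀ hd₀ hh))]
      · intro h'; exact absurd hd₀ h'
    rw [h] at hco
    exact (mem_support_iff.mp hd₀) (by simpa using hco.symm)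
  have key : algebraMap (Apoly k) (Kfield k) q
      = aeval (vv k c) p * ↑(∏ i, UK k i ^ s i) := by
    conv_rhs => rw [p.as_sum]
    rw [hq, map_sum, map_sum, Finset.sum_mul]
    refine Finset.sum_congr rfl fun d hd => ?_
    rw [algebraMap_monomial, aeval_vv_monomial, mul_assoc]
    congr 1
    have hcast : (∏ i, XK k i ^ ((e d) i))
        = ((∏ i, UK k i ^ (E d i + s i) : (Kfield k)ˣ) : Kfield k) := by
      push_cast
      refine Finset.prod_congr rfl fun i _ => ?_
      have : XK k i ^ ((e d) i) = ((UK k i ^ ((e d) i) : (Kfield k)ˣ) : Kfield k) := rfl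
      rw [this]
      norm_cast
      rw [← zpow_natCast (UK k i) ((e d) i)]
      congr 1
      simp only [he, Finsupp.coe_equivFunOnFinite_symm]
      exact Int.toNat_of_nonneg (hnn d hd i)
    rw [hcast]
    norm_cast
    rw [← Finset.prod_mul_distrib]
    exact Finset.prod_congr rfl fun i _ => zpow_add (UK k i) _ _
  rw [hp, zero_mul] at key
  exact hq0 (IsFractionRing.injective (Apoly k) (Kfield k) (by rw [key, map_zero]))

def cτm : Fin 3 → Fin 3 → ℤ := fun j i =>
  match j, i with
  | 0,0 => -1 | 0,1 => 0 | 0,2 => 0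
  | 1,0 => 0 | 1,1 => -2 | 1,2 => 5
  | 2,0 => 0 | 2,1 => -1 | 2,2 => 2

def cσm : Fin 3 → Fin 3 → ℤ := fun j i =>
  match j, i with
  | 0,0 => -1 | 0,1 => 0 | 0,2 => 0
  | 1,0 => 0 | 1,1 => 2 | 1,2 => -5
  | 2,0 => 0 | 2,1 => 1 | 2,2 => -2

theorem hcτ : ∀ d d' : Fin 3 → ℤ,
    (∀ i, ∑ j, d j * cτm j i = ∑ j, d' j * cτm j i) → d = d' := by
  intro d d' h
  have h0 := h 0; have h1 := h 1; have h2 := h 2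
  simp [cτm, Fin.sum_univ_three] at h0 h1 h2
  funext i; fin_cases i <;> simp <;> omega

theorem hcσ : ∀ d d' : Fin 3 → ℤ,
    (∀ i, ∑ j, d j * cσm j i = ∑ j, d' j * cσm j i) → d = d' := by
  intro d d' h
  have h0 := h 0; have h1 := h 1; have h2 := h 2
  simp [cσm, Fin.sum_univ_three] at h0 h1 h2
  funext i; fin_cases i <;> simp <;> omega

theorem Khom_ext (f g : Kfield k →ₐ[k] Kfield k) (h : ∀ i, f (XK k i) = g (XK k i)) :
    f = g := by
  have hr : (f : Kfield k →+* Kfield k) = g := by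
    apply IsLocalization.ringHom_ext (nonZeroDivisors (Apoly k))
    apply MvPolynomial.ringHom_ext
    · intro r
      have hC : algebraMap (Apoly k) (Kfield k) (C r) = algebraMap k (Kfield k) r := by
        rw [IsScalarTower.algebraMap_apply k (Apoly k) (Kfield k), MvPolynomial.algebraMap_eq]
      simp only [RingHom.comp_apply, RingHom.coe_coe, hC, f.commutes, g.commutes]
    · intro i
      simpa [XK] using h i
  exact AlgHom.ext fun x => DFunLike.congr_fun hr x

def φτ : Kfield k →ₐ[k] Kfield k :=
  IsFractionRing.liftAlgHom (g := aeval (vv k cτm)) (aeval_vv_injective k cτm hcτ)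
def φσ : Kfield k →ₐ[k] Kfield k :=
  IsFractionRing.liftAlgHom (g := aeval (vv k cσm)) (aeval_vv_injective k cσm hcσ)

theorem φτ_XK (i : Fin 3) : φτ k (XK k i) = vv k cτm i := by
  rw [XK, φτ, IsFractionRing.liftAlgHom_apply, IsFractionRing.lift_algebraMap]
  simp

theorem φσ_XK (i : Fin 3) : φσ k (XK k i) = vv k cσm i := by
  rw [XK, φσ, IsFractionRing.liftAlgHom_apply, IsFractionRing.lift_algebraMap]
  simp

theorem map_vv (ψ : Kfield k →ₐ[k] Kfield k) (c' : Fin 3 → Fin 3 → ℤ)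
    (hψ : ∀ i, ψ (XK k i) = vv k c' i) (c : Fin 3 → Fin 3 → ℤ) (j : Fin 3) :
    ψ (vv k c j) = ∏ i, vv k c' i ^ c j i := by
  rw [vv, map_prod]
  exact Finset.prod_congr rfl fun i _ => by rw [map_zpow₀, hψ]

theorem vv_comp (c c' : Fin 3 → Fin 3 → ℤ)
    (h : ∀ j l, ∑ i, c' j i * c i l = if l = j then 1 else 0) (j : Fin 3) :
    ∏ i, vv k c i ^ c' j i = XK k j := by
  have h1 : ∀ i, vv k c i ^ c' j i
      = ((∏ l, UK k l ^ c i l) ^ c' j i : (Kfield k)ˣ) := by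
    intro i; rw [vv_eq_units, ← Units.val_zpow_eq_zpow_val]
  rw [Finset.prod_congr rfl fun i _ => h1 i]
  norm_cast
  have h2 : (∏ i, (∏ l, UK k l ^ c i l) ^ c' j i : (Kfield k)ˣ)
      = ∏ l, UK k l ^ (∑ i, c' j i * c i l) := by
    have h3 : ∀ i, (∏ l, UK k l ^ c i l) ^ c' j i = ∏ l, UK k l ^ (c' j i * c i l) := by
      intro i
      rw [← Finset.prod_zpow]
      exact Finset.prod_congr rfl fun l _ => by rw [mul_comm, ← zpow_mul, mul_comm]
    rw [Finset.prod_congr rfl fun i _ => h3 i, Finset.prod_comm]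
    refine Finset.prod_congr rfl fun l _ => ?_
    simp [Fin.prod_univ_three, Fin.sum_univ_three, zpow_add]
  rw [h2, Finset.prod_congr rfl fun l _ => by rw [h j l]]
  have : (XK k j) = ((UK k j : (Kfield k)ˣ) : Kfield k) := rfl
  rw [this]
  norm_cast
  fin_cases j <;> simp [Fin.prod_univ_three]

theorem mat_στ : ∀ j l, ∑ i, cσm j i * cτm i l = if l = j then 1 else 0 := by
  intro j l; fin_cases j <;> fin_cases l <;> simp [cσm, cτm, Fin.sum_univ_three]

theorem mat_τσ : ∀ j l, ∑ i, cτm j i * cσm i l = if l = j then 1 else 0 := by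
  intro j l; fin_cases j <;> fin_cases l <;> simp [cσm, cτm, Fin.sum_univ_three]

def τequiv : Kfield k ≃ₐ[k] Kfield k :=
  AlgEquiv.ofAlgHom (φτ k) (φσ k)
    (Khom_ext k _ _ fun i => by
      simp only [AlgHom.comp_apply, AlgHom.id_apply, φσ_XK, map_vv k (φτ k) cτm (φτ_XK k)]
      exact vv_comp k cτm cσm (mat_στ) i)
    (Khom_ext k _ _ fun i => by
      simp only [AlgHom.comp_apply, AlgHom.id_apply, φτ_XK, map_vv k (φσ k) cσm (φσ_XK k)]
      exact vv_comp k cσm cτm (mat_τσ) i)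

theorem τequiv_XK (i : Fin 3) : τequiv k (XK k i) = vv k cτm i := φτ_XK k i

theorem vτ0 : vv k cτm 0 = (XK k 0)⁻¹ := by
  simp [vv, cτm, Fin.prod_univ_three]

theorem vτ1 : vv k cτm 1 = (XK k 2) ^ 5 * ((XK k 1) ^ 2)⁻¹ := by
  simp [vv, cτm, Fin.prod_univ_three, zpow_neg, inv_pow]
  rw [mul_comm]

theorem vτ2 : vv k cτm 2 = (XK k 2) ^ 2 * (XK k 1)⁻¹ := by
  simp [vv, cτm, Fin.prod_univ_three, zpow_neg]
  rw [mul_comm]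

end

theorem generic_tau_automorphism (k : Type*) [Field k] :
    let K := FractionRing (MvPolynomial (Fin 3) k)
    let a : K := algebraMap (MvPolynomial (Fin 3) k) K (MvPolynomial.X 0)
    let b : K := algebraMap (MvPolynomial (Fin 3) k) K (MvPolynomial.X 1)
    let η : K := algebraMap (MvPolynomial (Fin 3) k) K (MvPolynomial.X 2)
    ∃ τ : K ≃ₐ[k] K,
      τ a = a⁻¹ ∧ τ b = η ^ 5 * (b ^ 2)⁻¹ ∧ τ η = η ^ 2 * b⁻¹ ∧
      τ (τ a) = a ∧ τ (τ b) = b⁻¹ ∧ τ (τ η) = η⁻¹ ∧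
      τ ^ 4 = 1 := by
  intro K a b η
  have ha : a = XK k 0 := rfl
  have hb : b = XK k 1 := rfl
  have hη : η = XK k 2 := rfl
  have hb0 : b ≠ 0 := hb ▸ XK_ne_zero k 1
  have hη0 : η ≠ 0 := hη ▸ XK_ne_zero k 2
  set τ := τequiv k with hτ
  have h1 : τ a = a⁻¹ := by rw [ha, τequiv_XK, vτ0]
  have h2 : τ b = η ^ 5 * (b ^ 2)⁻¹ := by rw [hb, τequiv_XK, vτ1, ← hb, ← hη]
  have h3 : τ η = η ^ 2 * b⁻¹ := by rw [hη, τequiv_XK, vτ2, ← hb, ← hη]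
  have h4 : τ (τ a) = a := by rw [h1, map_inv₀, h1, inv_inv]
  have h5 : τ (τ b) = b⁻¹ := by
    rw [h2, map_mul, map_pow, map_inv₀, map_pow, h2, h3]
    field_simp
  have h6 : τ (τ η) = η⁻¹ := by
    rw [h3, map_mul, map_pow, map_inv₀, h2, h3]
    field_simp
  refine ⟨τ, h1, h2, h3, h4, h5, h6, ?_⟩
  have hτ4 : ∀ x : K, (τ ^ 4) x = τ (τ (τ (τ x))) := by
    intro x
    show (τ * τ * τ * τ) x = _
    · rw [AlgEquiv.mul_apply, AlgEquiv.mul_apply, AlgEquiv.mul_apply]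
  have hAH : ((τ ^ 4 : K ≃ₐ[k] K) : K →ₐ[k] K) = AlgHom.id k K := by
    apply Khom_ext
    intro i
    have : ((τ ^ 4 : K ≃ₐ[k] K) : K →ₐ[k] K) (XK k i) = (τ ^ 4) (XK k i) := rfl
    rw [this, AlgHom.id_apply, hτ4]
    fin_cases i
    · show τ (τ (τ (τ a))) = a
      rw [h4, h4]
    · show τ (τ (τ (τ b))) = b
      rw [h5, map_inv₀, map_inv₀, h5, inv_inv]
    · show τ (τ (τ (τ η))) = η
      rw [h6, map_inv₀, map_inv₀, h6, inv_inv]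
  exact AlgEquiv.ext fun x => DFunLike.congr_fun hAH x
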